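/- (Uniqueness of the Procrustes solution) Let C be a real n×n matrix with singular value decomposition C = UΣVᵀ (U, V orthogonal, Σ diagonal with nonnegative entries). If C is invertible, then X_* := VUᵀ is the unique maximizer of Tr(CX) over X ∈ O(n): any X ∈ O(n) with Tr(C X) = Tr(Σ) equals VUᵀ. Conversely, if C is singular, there exist at least two distinct maximizers of Tr(CX) over O(n). -/

import Mathlib

open Matrix

noncomputable section

/-- Matrix exponential of a real square matrix. -/
def mexp {n : ℕ} (A : Matrix (Fin n) (Fin n) ℝ) : Matrix (Fin n) (Fin n) ℝ :=
  NormedSpace.exp A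

/-- Skew-symmetric part: `skew M = (M - Mᵀ)/2`. -/
def skewPart {n : ℕ} (M : Matrix (Fin n) (Fin n) ℝ) : Matrix (Fin n) (Fin n) ℝ :=
  (1 / 2 : ℝ) • (M - Mᵀ)

/-- Frobenius norm of a real square matrix. -/
def frobNorm {n : ℕ} (A : Matrix (Fin n) (Fin n) ℝ) : ℝ :=
  Real.sqrt (∑ i, ∑ j, (A i j) ^ 2)

/-- The singular values of `A`: square roots of the eigenvalues of `AᴴA = AᵀA`. -/
def singVals {n : ℕ} (A : Matrix (Fin n) (Fin n) ℝ) : Fin n → ℝ :=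
  fun i => Real.sqrt ((show (Aᵀ * A).IsHermitian by
    rw [← Matrix.conjTranspose_eq_transpose_of_trivial]
    exact Matrix.isHermitian_conjTranspose_mul_self A).eigenvalues i)

/-- Largest singular value of `A`. -/
def sigmaMax {n : ℕ} (A : Matrix (Fin n) (Fin n) ℝ) : ℝ := ⨆ i, singVals A i

/-- Smallest singular value of `A`. -/
def sigmaMin {n : ℕ} (A : Matrix (Fin n) (Fin n) ℝ) : ℝ := ⨅ i, singVals A i

/-- Spectral norm (largest singular value) of `A`. -/
def specNorm {n : ℕ} (A : Matrix (Fin n) (Fin n) ℝ) : ℝ := sigmaMax A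

/-- Riemannian distance on a connected component of `O(n)`:
`dist(X,Y) = min { ‖Ω‖_F : Ω skew-symmetric, X·exp(Ω) = Y }`. -/
def Odist {n : ℕ} (X Y : Matrix (Fin n) (Fin n) ℝ) : ℝ :=
  sInf {d : ℝ | ∃ Ω : Matrix (Fin n) (Fin n) ℝ, Ωᵀ = -Ω ∧ X * mexp Ω = Y ∧ d = frobNorm Ω}

end


lemma tr_cycle {n : ℕ} (U S V X : Matrix (Fin n) (Fin n) ℝ) :
    (U * S * Vᵀ * X).trace = (S * (Vᵀ * X * U)).trace := by
  calc (U * S * Vᵀ * X).trace = ((U * S) * (Vᵀ * X)).trace := by rw [mul_assoc (U*S) Vᵀ X]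
    _ = ((Vᵀ * X) * (U * S)).trace := Matrix.trace_mul_comm _ _
    _ = ((Vᵀ * X * U) * S).trace := by rw [mul_assoc (Vᵀ*X) U S]
    _ = (S * (Vᵀ * X * U)).trace := Matrix.trace_mul_comm _ _

lemma col_sq {n : ℕ} {W : Matrix (Fin n) (Fin n) ℝ} (hW : Wᵀ * W = 1)
    (j : Fin n) : ∑ i, (W i j) ^ 2 = 1 := by
  have := congrFun (congrFun hW j) j
  simpa [Matrix.mul_apply, Matrix.transpose_apply, pow_two, Matrix.one_apply] using this

lemma orth_diag_one {n : ℕ} {W : Matrix (Fin n) (Fin n) ℝ} (hW : Wᵀ * W = 1)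
    (hdiag : ∀ i, W i i = 1) : W = 1 := by
  ext i j
  by_cases h : i = j
  · subst h; simp [hdiag]
  · have hs := col_sq hW j
    have hsplit := Finset.add_sum_erase Finset.univ (fun i => (W i j)^2) (Finset.mem_univ j)
    simp only [hs, hdiag j, one_pow] at hsplit
    have hz : ∑ i ∈ Finset.univ.erase j, (W i j)^2 = 0 := by linarith
    have := (Finset.sum_eq_zero_iff_of_nonneg (fun i _ => sq_nonneg (W i j))).mp hz i
      (Finset.mem_erase.mpr ⟨h, Finset.mem_univ i⟩)
    have hW0 : W i j = 0 := by nlinarith [this]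
    simp [hW0, Matrix.one_apply, h]

lemma trace_diag_mul {n : ℕ} {S : Matrix (Fin n) (Fin n) ℝ} (hS : S.IsDiag)
    (W : Matrix (Fin n) (Fin n) ℝ) :
    (S * W).trace = ∑ i, S i i * W i i := by
  rw [Matrix.trace]
  refine Finset.sum_congr rfl (fun i _ => ?_)
  rw [Matrix.diag_apply, Matrix.mul_apply]
  refine Finset.sum_eq_single i (fun j _ hj => ?_) (by simp)
  rw [hS (Ne.symm hj), zero_mul]


/-- uniqueness of the Procrustes solution. If `C` is invertible,
`V Uᵀ` is the unique maximizer of `Tr(CX)` over `O(n)`; if `C` is singular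
there are at least two distinct maximizers. -/
theorem procrustes_uniqueness {n : ℕ}
    (C U S V : Matrix (Fin n) (Fin n) ℝ)
    (hU : Uᵀ * U = 1) (hV : Vᵀ * V = 1)
    (hSdiag : S.IsDiag) (hSnn : ∀ i, 0 ≤ S i i)
    (hSVD : C = U * S * Vᵀ) :
    (IsUnit C →
      ∀ X : Matrix (Fin n) (Fin n) ℝ, Xᵀ * X = 1 →
        (C * X).trace = S.trace → X = V * Uᵀ) ∧
    (¬ IsUnit C →
      ∃ X Y : Matrix (Fin n) (Fin n) ℝ,
        Xᵀ * X = 1 ∧ Yᵀ * Y = 1 ∧ X ≠ Y ∧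
        (C * X).trace = S.trace ∧ (C * Y).trace = S.trace) := by
  have hUU : U * Uᵀ = 1 := mul_eq_one_comm.mp hU
  have hVV : V * Vᵀ = 1 := mul_eq_one_comm.mp hV
  have hSdet : S.det = ∏ i, S i i := by
    conv_lhs => rw [← hSdiag.diagonal_diag]
    simp [Matrix.det_diagonal, Matrix.diag]
  have htrS : S.trace = ∑ i, S i i := rfl
  constructor
  · intro hC X hX htr
    -- singular values are positive
    have hdet : C.det ≠ 0 := by
      intro h0
      exact ((Matrix.isUnit_iff_isUnit_det C).mp hC).ne_zero h0
    have hSdet0 : S.det ≠ 0 := by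
      intro h0
      apply hdet
      rw [hSVD, Matrix.det_mul, Matrix.det_mul, h0, mul_zero, zero_mul]
    have hpos : ∀ i, 0 < S i i := by
      intro i
      rcases lt_or_eq_of_le (hSnn i) with h | h
      · exact h
      · exfalso; apply hSdet0
        rw [hSdet]
        exact Finset.prod_eq_zero (Finset.mem_univ i) h.symm
    set W := Vᵀ * X * U with hWdef
    have hWorth : Wᵀ * W = 1 := by
      rw [hWdef]
      simp only [Matrix.transpose_mul, Matrix.transpose_transpose, Matrix.mul_assoc]
      rw [show V * (Vᵀ * (X * U)) = (V * Vᵀ) * (X * U) from (mul_assoc _ _ _).symm, hVV,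
        one_mul, show Xᵀ * (X * U) = (Xᵀ * X) * U from (mul_assoc _ _ _).symm, hX, one_mul, hU]
    have htrW : (S * W).trace = S.trace := by
      rw [hWdef, ← tr_cycle U S V X, ← hSVD, htr]
    rw [trace_diag_mul hSdiag, htrS] at htrW
    have hdiagW : ∀ i, W i i = 1 := by
      have hle : ∀ i, W i i ≤ 1 := by
        intro i
        have h1 := col_sq hWorth i
        have h2 : (W i i)^2 ≤ 1 := by
          rw [← h1]
          exact Finset.single_le_sum (fun j _ => sq_nonneg (W j i)) (Finset.mem_univ i)
        nlinarith
      have hz : ∑ i, S i i * (1 - W i i) = 0 := by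
        have heq : ∑ i, S i i * (1 - W i i) = ∑ i, S i i - ∑ i, S i i * W i i := by
          rw [← Finset.sum_sub_distrib]
          exact Finset.sum_congr rfl (fun i _ => by ring)
        rw [heq, htrW, sub_self]
      intro i
      have hterm := (Finset.sum_eq_zero_iff_of_nonneg
        (fun i _ => mul_nonneg (hSnn i) (by linarith [hle i]))).mp hz i (Finset.mem_univ i)
      have hne := (hpos i).ne'
      have h10 : 1 - W i i = 0 := by
        rcases mul_eq_zero.mp hterm with h | h
        · exact absurd h hne
        · exact h
      linarith
    have hW1 : W = 1 := orth_diag_one hWorth hdiagW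
    -- recover X
    have hrec : V * W * Uᵀ = V * Uᵀ := by rw [hW1, mul_one]
    rw [hWdef] at hrec
    calc X = (V * Vᵀ) * X * (U * Uᵀ) := by rw [hVV, hUU, one_mul, mul_one]
      _ = V * (Vᵀ * X * U) * Uᵀ := by simp only [Matrix.mul_assoc]
      _ = V * Uᵀ := hrec
  · intro hC
    have hdet : C.det = 0 := by
      by_contra h0
      exact hC ((Matrix.isUnit_iff_isUnit_det C).mpr (isUnit_iff_ne_zero.mpr h0))
    have hUdet : U.det ≠ 0 := by
      intro h0
      have h1 := congrArg Matrix.det hU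
      rw [Matrix.det_mul, Matrix.det_transpose, h0, mul_zero, Matrix.det_one] at h1
      exact zero_ne_one h1
    have hVdet : V.det ≠ 0 := by
      intro h0
      have h1 := congrArg Matrix.det hV
      rw [Matrix.det_mul, Matrix.det_transpose, h0, mul_zero, Matrix.det_one] at h1
      exact zero_ne_one h1
    have hSdet0 : S.det = 0 := by
      have h1 : U.det * S.det * Vᵀ.det = 0 := by
        rw [← Matrix.det_mul, ← Matrix.det_mul, ← hSVD, hdet]
      rcases mul_eq_zero.mp h1 with h | h
      · rcases mul_eq_zero.mp h with h | h
        · exact absurd h hUdet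
        · exact h
      · rw [Matrix.det_transpose] at h; exact absurd h hVdet
    rw [hSdet] at hSdet0
    obtain ⟨i₀, -, hi₀⟩ := Finset.prod_eq_zero_iff.mp hSdet0
    set d : Fin n → ℝ := fun i => if i = i₀ then -1 else 1 with hd
    set D := Matrix.diagonal d with hD
    have hDT : Dᵀ = D := Matrix.diagonal_transpose d
    have hdd : ∀ i, d i * d i = 1 := by
      intro i; by_cases h : i = i₀ <;> simp [hd, h]
    have hDD : D * D = 1 := by
      rw [hD, Matrix.diagonal_mul_diagonal,
        show (fun i => d i * d i) = fun _ => (1:ℝ) from funext hdd, Matrix.diagonal_one]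
    refine ⟨V * Uᵀ, V * D * Uᵀ, ?_, ?_, ?_, ?_, ?_⟩
    · simp only [Matrix.transpose_mul, Matrix.transpose_transpose, Matrix.mul_assoc]
      rw [show Vᵀ * (V * Uᵀ) = (Vᵀ * V) * Uᵀ from (mul_assoc _ _ _).symm, hV, one_mul, hUU]
    · simp only [Matrix.transpose_mul, Matrix.transpose_transpose, hDT, Matrix.mul_assoc]
      rw [show Vᵀ * (V * (D * Uᵀ)) = (Vᵀ * V) * (D * Uᵀ) from (mul_assoc _ _ _).symm, hV, one_mul,
        show D * (D * Uᵀ) = (D * D) * Uᵀ from (mul_assoc _ _ _).symm, hDD, one_mul, hUU]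
    · intro heq
      have h1 : Vᵀ * (V * Uᵀ) * U = Vᵀ * (V * D * Uᵀ) * U := by rw [heq]
      have h2 : (1 : Matrix (Fin n) (Fin n) ℝ) = D := by
        calc (1 : Matrix (Fin n) (Fin n) ℝ) = (Vᵀ * V) * (Uᵀ * U) := by rw [hV, hU, one_mul]
          _ = Vᵀ * (V * Uᵀ) * U := by simp only [Matrix.mul_assoc]
          _ = Vᵀ * (V * D * Uᵀ) * U := h1
          _ = (Vᵀ * V) * (D * (Uᵀ * U)) := by simp only [Matrix.mul_assoc]
          _ = D := by rw [hV, hU, one_mul, mul_one]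
      have h3 := congrFun (congrFun h2 i₀) i₀
      simp [hD, hd, Matrix.one_apply] at h3
      linarith
    · rw [hSVD, tr_cycle]
      have h1 : Vᵀ * (V * Uᵀ) * U = 1 := by
        calc Vᵀ * (V * Uᵀ) * U = (Vᵀ * V) * (Uᵀ * U) := by simp only [Matrix.mul_assoc]
          _ = 1 := by rw [hV, hU, one_mul]
      rw [h1, mul_one]
    · rw [hSVD, tr_cycle]
      have hW : Vᵀ * (V * D * Uᵀ) * U = D := by
        calc Vᵀ * (V * D * Uᵀ) * U = (Vᵀ * V) * (D * (Uᵀ * U)) := by simp only [Matrix.mul_assoc]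
          _ = D := by rw [hV, hU, one_mul, mul_one]
      rw [hW, trace_diag_mul hSdiag, htrS]
      refine Finset.sum_congr rfl (fun i _ => ?_)
      by_cases h : i = i₀
      · subst h; simp [hD, hd, Matrix.diagonal_apply_eq, hi₀]
      · simp [hD, hd, Matrix.diagonal_apply_eq, h]
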